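/- Let S be a nonempty finite set of real numbers with K = |S|, for each M ≥ 1 let f_M : ℝ^M → ℝ be any function, and let L be a natural number with L ≥ K. Then the double sum ∑_{M=1}^{L} ∑_{n=M}^{L} ((-1)^{n-M}/(n-M)!) · (∑ over injective tuples t : Fin n → S with t 0 < t 1 < ⋯ < t (M-1) of f_M(t 0,…,t (M-1))) equals f_K(s_1,…,s_K), where s_1 < s_2 < ⋯ < s_K is the increasing enumeration of S. -/

import Mathlib

lemma myFiberCard {α : Type*} [Fintype α] [DecidableEq α] (M m : ℕ) (s : Fin M → α)
    (hs : Function.Injective s) :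
    (Finset.univ.filter (fun t : Fin (M + m) → α =>
      Function.Injective t ∧ ∀ i : Fin M, t (Fin.castLE (Nat.le_add_right M m) i) = s i)).card
    = (Fintype.card α - M).descFactorial m := by
  rw [← Fintype.card_subtype]
  have e : {t : Fin (M + m) → α // Function.Injective t ∧
      ∀ i : Fin M, t (Fin.castLE (Nat.le_add_right M m) i) = s i} ≃
      (Fin m ↪ {x : α // x ∉ Set.range s}) :=
    { toFun := fun t => ⟨fun j => ⟨t.1 (Fin.natAdd M j), by
        rintro ⟨i, hi⟩
        have h1 : t.1 (Fin.castLE (Nat.le_add_right M m) i) = s i := t.2.2 i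
        have h2 : Fin.castLE (Nat.le_add_right M m) i = Fin.natAdd M j :=
          t.2.1 (by rw [h1, hi])
        have h3 := congrArg Fin.val h2
        simp only [Fin.coe_castLE, Fin.coe_natAdd] at h3
        omega⟩, by
        intro j k h
        have h1 : t.1 (Fin.natAdd M j) = t.1 (Fin.natAdd M k) := congrArg Subtype.val h
        have h2 := congrArg Fin.val (t.2.1 h1)
        simp only [Fin.coe_natAdd] at h2
        exact Fin.ext (by omega)⟩
      invFun := fun e => ⟨Fin.append s (fun j => (e j : α)), by
        constructor
        · intro a
          refine Fin.addCases (fun i => ?_) (fun i => ?_) a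
          · intro b
            refine Fin.addCases (fun j hj => ?_) (fun j hj => ?_) b
            · rw [Fin.append_left, Fin.append_left] at hj
              exact congrArg _ (hs hj)
            · rw [Fin.append_left, Fin.append_right] at hj
              exact absurd ⟨i, hj⟩ (e j).2
          · intro b
            refine Fin.addCases (fun j hj => ?_) (fun j hj => ?_) b
            · rw [Fin.append_right, Fin.append_left] at hj
              exact absurd ⟨j, hj.symm⟩ (e i).2
            · rw [Fin.append_right, Fin.append_right] at hj
              exact congrArg _ (e.injective (Subtype.ext hj))
        · intro i
          have : Fin.castLE (Nat.le_add_right M m) i = Fin.castAdd m i := rfl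
          rw [this, Fin.append_left]⟩
      left_inv := by
        rintro ⟨t, ht1, ht2⟩
        apply Subtype.ext
        funext a
        dsimp only
        refine Fin.addCases (fun i => ?_) (fun i => ?_) a
        · rw [Fin.append_left]
          exact (ht2 i).symm
        · rw [Fin.append_right]
          rfl
      right_inv := by
        intro e
        ext j
        simp [Fin.append_right] }
  rw [Fintype.card_congr e, Fintype.card_embedding_eq, Fintype.card_fin]
  congr 1
  rw [Fintype.card_subtype_compl]
  congr 1
  exact (Set.card_range_of_injective hs).trans (Fintype.card_fin M)

lemma myCoeffSum (n R : ℕ) (h : n ≤ R) :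
    ∑ m ∈ Finset.range (R + 1), ((-1 : ℝ) ^ m / (m.factorial : ℝ)) * (n.descFactorial m : ℝ)
      = if n = 0 then 1 else 0 := by
  rw [← Finset.sum_subset (Finset.range_subset_range.mpr (by omega) :
      Finset.range (n + 1) ⊆ Finset.range (R + 1))]
  · have key : ∀ m ∈ Finset.range (n + 1),
        ((-1 : ℝ) ^ m / (m.factorial : ℝ)) * (n.descFactorial m : ℝ)
          = (-1 : ℝ) ^ m * (n.choose m : ℝ) := by
      intro m _
      rw [Nat.descFactorial_eq_factorial_mul_choose]
      have hm : (m.factorial : ℝ) ≠ 0 := Nat.cast_ne_zero.mpr m.factorial_ne_zero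
      push_cast
      field_simp
    rw [Finset.sum_congr rfl key]
    have := Int.alternating_sum_range_choose (n := n)
    have := congrArg (Int.cast : ℤ → ℝ) this
    push_cast at this
    rw [this]
  · intro m hm hm'
    simp only [Finset.mem_range] at hm hm'
    rw [Nat.descFactorial_eq_zero_iff_lt.mpr (by omega)]
    simp



set_option maxHeartbeats 1000000 in
open scoped Classical in
/-- Finite-set form of the combined compensation scheme: for a nonempty finite `S ⊆ ℝ`
with `|S| = K`, kernels `f_M : ℝ^M → ℝ` for every `M ≥ 1`, and `L ≥ K`, the double
alternating sum
`∑_{M=1}^{L} ∑_{n=M}^{L} ((-1)^{n-M}/(n-M)!) ∑_{t} f_M (t 0, …, t (M-1))`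
(written with `n = M + m`), the innermost sum being over injective tuples
`t : Fin n → S` whose first `M` coordinates are strictly increasing, equals `f_K`
evaluated at the increasing enumeration `s_1 < ⋯ < s_K` of `S`. -/
theorem stmt_4 (S : Finset ℝ) (hS : S.Nonempty) (K : ℕ) (hK : S.card = K)
    (f : (M : ℕ) → (Fin M → ℝ) → ℝ) (L : ℕ) (hL : K ≤ L) :
    ∑ M ∈ Finset.Icc 1 L, ∑ m ∈ Finset.range (L - M + 1),
      ((-1 : ℝ) ^ m / (m.factorial : ℝ)) *
        ∑ t ∈ Finset.univ.filter (fun t : Fin (M + m) → S =>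
            Function.Injective t ∧
              StrictMono fun i : Fin M => (t (Fin.castLE (Nat.le_add_right M m) i) : ℝ)),
          f M (fun i => (t (Fin.castLE (Nat.le_add_right M m) i) : ℝ)) =
    f K (fun i => (S.orderIsoOfFin hK i : ℝ)) := by
  have hK1 : 1 ≤ K := by rw [← hK]; exact Finset.card_pos.mpr hS
  have hcard : Fintype.card ↥S = K := by rw [Fintype.card_coe, hK]
  set Q : (M : ℕ) → Finset (Fin M → S) := fun M =>
    Finset.univ.filter (fun s : Fin M → S => StrictMono fun i => (s i : ℝ)) with hQ
  have inner : ∀ M m, (∑ t ∈ Finset.univ.filter (fun t : Fin (M + m) → S =>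
        Function.Injective t ∧
          StrictMono fun i : Fin M => (t (Fin.castLE (Nat.le_add_right M m) i) : ℝ)),
      f M (fun i => (t (Fin.castLE (Nat.le_add_right M m) i) : ℝ)))
      = ((K - M).descFactorial m : ℝ) * ∑ s ∈ Q M, f M (fun i => (s i : ℝ)) := by
    intro M m
    have hmaps : ∀ t ∈ Finset.univ.filter (fun t : Fin (M + m) → S =>
        Function.Injective t ∧
          StrictMono fun i : Fin M => (t (Fin.castLE (Nat.le_add_right M m) i) : ℝ)),
        (fun i : Fin M => t (Fin.castLE (Nat.le_add_right M m) i)) ∈ Q M := by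
      intro t ht
      simp only [hQ, Finset.mem_filter, Finset.mem_univ, true_and] at ht ⊢
      exact ht.2
    rw [← Finset.sum_fiberwise_of_maps_to hmaps
      (fun t : Fin (M + m) → S => f M (fun i => (t (Fin.castLE (Nat.le_add_right M m) i) : ℝ)))]
    rw [Finset.mul_sum]
    refine Finset.sum_congr rfl fun y hy => ?_
    simp only [hQ, Finset.mem_filter, Finset.mem_univ, true_and] at hy
    have hyinj : Function.Injective y := fun a b h => hy.injective (congrArg _ h)
    have hconst : ∀ x ∈ (Finset.univ.filter (fun t : Fin (M + m) → S =>
        Function.Injective t ∧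
          StrictMono fun i : Fin M => (t (Fin.castLE (Nat.le_add_right M m) i) : ℝ))).filter
          (fun t => (fun i : Fin M => t (Fin.castLE (Nat.le_add_right M m) i)) = y),
        f M (fun i => (x (Fin.castLE (Nat.le_add_right M m) i) : ℝ))
          = f M (fun i => (y i : ℝ)) := by
      intro x hx
      simp only [Finset.mem_filter] at hx
      exact congrArg (f M) (funext fun i => congrArg _ (congrFun hx.2 i))
    rw [Finset.sum_congr rfl hconst, Finset.sum_const, nsmul_eq_mul]
    congr 1
    have hset : (Finset.univ.filter (fun t : Fin (M + m) → S =>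
        Function.Injective t ∧
          StrictMono fun i : Fin M => (t (Fin.castLE (Nat.le_add_right M m) i) : ℝ))).filter
          (fun t => (fun i : Fin M => t (Fin.castLE (Nat.le_add_right M m) i)) = y)
        = Finset.univ.filter (fun t : Fin (M + m) → S =>
            Function.Injective t ∧ ∀ i : Fin M, t (Fin.castLE (Nat.le_add_right M m) i) = y i) := by
      ext t
      simp only [Finset.mem_filter, Finset.mem_univ, true_and]
      constructor
      · rintro ⟨⟨h1, _⟩, h3⟩
        exact ⟨h1, fun i => congrFun h3 i⟩
      · rintro ⟨h1, h2⟩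
        have h3 : (fun i : Fin M => t (Fin.castLE (Nat.le_add_right M m) i)) = y := funext h2
        refine ⟨⟨h1, ?_⟩, h3⟩
        have h4 : (fun i : Fin M => (t (Fin.castLE (Nat.le_add_right M m) i) : ℝ))
            = fun i => (y i : ℝ) := funext fun i => by rw [h2 i]
        rw [h4]
        exact hy
    rw [hset]
    have hfc := myFiberCard (α := ↥S) M m y hyinj
    rw [hcard] at hfc
    exact congrArg Nat.cast hfc
  have step1 : ∑ M ∈ Finset.Icc 1 L, ∑ m ∈ Finset.range (L - M + 1),
      ((-1 : ℝ) ^ m / (m.factorial : ℝ)) *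
        ∑ t ∈ Finset.univ.filter (fun t : Fin (M + m) → S =>
            Function.Injective t ∧
              StrictMono fun i : Fin M => (t (Fin.castLE (Nat.le_add_right M m) i) : ℝ)),
          f M (fun i => (t (Fin.castLE (Nat.le_add_right M m) i) : ℝ))
      = ∑ M ∈ Finset.Icc 1 L, (∑ m ∈ Finset.range (L - M + 1),
          ((-1 : ℝ) ^ m / (m.factorial : ℝ)) * ((K - M).descFactorial m : ℝ)) *
          (∑ s ∈ Q M, f M (fun i => (s i : ℝ))) := by
    refine Finset.sum_congr rfl fun M _ => ?_
    rw [Finset.sum_mul]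
    refine Finset.sum_congr rfl fun m _ => ?_
    rw [inner M m]
    ring
  rw [step1]
  rw [Finset.sum_eq_single_of_mem K (Finset.mem_Icc.mpr ⟨hK1, hL⟩)]
  · have hc : ∑ m ∈ Finset.range (L - K + 1),
        ((-1 : ℝ) ^ m / (m.factorial : ℝ)) * ((K - K).descFactorial m : ℝ) = 1 := by
      rw [Nat.sub_self]
      rw [myCoeffSum 0 (L - K) (Nat.zero_le _)]
      simp
    rw [hc, one_mul]
    have hQK : Q K = {fun i => S.orderIsoOfFin hK i} := by
      ext s
      simp only [hQ, Finset.mem_filter, Finset.mem_univ, true_and, Finset.mem_singleton]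
      constructor
      · intro hmono
        have h1 : (fun i => ((s i : ℝ))) = ⇑(S.orderEmbOfFin hK) :=
          Finset.orderEmbOfFin_unique hK (fun i => (s i).2) hmono
        funext i
        apply Subtype.ext
        show (s i : ℝ) = (S.orderIsoOfFin hK i : ℝ)
        rw [Finset.coe_orderIsoOfFin_apply]
        exact congrFun h1 i
      · rintro rfl
        intro a b hab
        show ((S.orderIsoOfFin hK a : ℝ)) < ((S.orderIsoOfFin hK b : ℝ))
        rw [Finset.coe_orderIsoOfFin_apply, Finset.coe_orderIsoOfFin_apply]
        exact (S.orderEmbOfFin hK).strictMono hab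
    rw [hQK, Finset.sum_singleton]
  · intro M hM hMK
    rcases lt_or_gt_of_ne hMK with h | h
    · have hc : ∑ m ∈ Finset.range (L - M + 1),
          ((-1 : ℝ) ^ m / (m.factorial : ℝ)) * ((K - M).descFactorial m : ℝ) = 0 := by
        rw [myCoeffSum (K - M) (L - M) (by omega)]
        simp only [Finset.mem_Icc] at hM
        rw [if_neg (by omega)]
      rw [hc, zero_mul]
    · have hQM : Q M = ∅ := by
        rw [hQ]
        rw [Finset.filter_eq_empty_iff]
        intro s _
        intro hmono
        have hinj : Function.Injective s := fun a b hab => hmono.injective (congrArg _ hab)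
        have := Fintype.card_le_of_injective s hinj
        rw [Fintype.card_fin, hcard] at this
        omega
      rw [hQM, Finset.sum_empty, mul_zero]
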